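/- On (0, e^{-√2}), the function F(ρ) = log³ρ/3 - log²ρ/2 - 2 log ρ - 4 log( -log ρ/(log²ρ + 2log ρ + 2) ) - 2/log²ρ has derivative F'(ρ) = (2 - log²ρ)²(log ρ + 1)(log²ρ + 2)/(ρ log³ρ (log²ρ + 2 log ρ + 2)). -/

import Mathlib

/-- The antiderivative identity for the volume enclosed by the Epstein surface
of the cusp metric: on `(0, e^{-√2})`, the function
`F(ρ) = log³ρ/3 - log²ρ/2 - 2 log ρ - 4 log(-log ρ/(log²ρ + 2log ρ + 2)) - 2/log²ρ`
has derivative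
`F'(ρ) = (2 - log²ρ)²(log ρ + 1)(log²ρ + 2)/(ρ log³ρ (log²ρ + 2 log ρ + 2))`. -/
theorem hasDerivAt_cusp_volume_antiderivative
    (ρ : ℝ) (h0 : 0 < ρ) (h1 : ρ < Real.exp (-Real.sqrt 2)) :
    HasDerivAt (fun x : ℝ =>
        (Real.log x)^3 / 3 - (Real.log x)^2 / 2 - 2 * Real.log x
          - 4 * Real.log (-(Real.log x) / ((Real.log x)^2 + 2 * Real.log x + 2))
          - 2 / (Real.log x)^2)
      ((2 - (Real.log ρ)^2)^2 * (Real.log ρ + 1) * ((Real.log ρ)^2 + 2) /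
        (ρ * (Real.log ρ)^3 * ((Real.log ρ)^2 + 2 * Real.log ρ + 2))) ρ := by
  set L := Real.log ρ with hLdef
  have hρ : ρ ≠ 0 := ne_of_gt h0
  have hLlt : L < -Real.sqrt 2 := by
    have := Real.log_lt_log h0 h1
    rwa [Real.log_exp] at this
  have hs2 : (0:ℝ) < Real.sqrt 2 := Real.sqrt_pos.mpr (by norm_num)
  have hLneg : L < 0 := hLlt.trans (by linarith)
  have hL0 : L ≠ 0 := ne_of_lt hLneg
  have hD : (0:ℝ) < L^2 + 2*L + 2 := by nlinarith [sq_nonneg (L+1)]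
  have hD0 : L^2 + 2*L + 2 ≠ 0 := ne_of_gt hD
  have hu0 : -L / (L^2 + 2*L + 2) ≠ 0 := by
    exact ne_of_gt (div_pos (by linarith) hD)
  have hlog : HasDerivAt Real.log ρ⁻¹ ρ := Real.hasDerivAt_log hρ
  have hp3 : HasDerivAt (fun x => (Real.log x)^3) ((3:ℕ) * L^2 * ρ⁻¹) ρ := by
    simpa using hlog.fun_pow 3
  have hp2 : HasDerivAt (fun x => (Real.log x)^2) ((2:ℕ) * L^1 * ρ⁻¹) ρ :=
    hlog.pow 2
  have hden : HasDerivAt (fun x => (Real.log x)^2 + 2 * Real.log x + 2)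
      ((2:ℕ) * L^1 * ρ⁻¹ + 2 * ρ⁻¹) ρ :=
    (hp2.add ((hlog.const_mul 2))).add_const 2
  have hnum : HasDerivAt (fun x => -(Real.log x)) (-ρ⁻¹) ρ := hlog.neg
  have hu : HasDerivAt (fun x => -(Real.log x) / ((Real.log x)^2 + 2 * Real.log x + 2))
      ((-ρ⁻¹ * (L^2 + 2*L + 2) - (-L) * ((2:ℕ) * L^1 * ρ⁻¹ + 2 * ρ⁻¹)) /
        (L^2 + 2*L + 2)^2) ρ :=
    hnum.div hden hD0
  have hlogu : HasDerivAt
      (fun x => Real.log (-(Real.log x) / ((Real.log x)^2 + 2 * Real.log x + 2)))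
      (((-ρ⁻¹ * (L^2 + 2*L + 2) - (-L) * ((2:ℕ) * L^1 * ρ⁻¹ + 2 * ρ⁻¹)) /
        (L^2 + 2*L + 2)^2) / (-L / (L^2 + 2*L + 2))) ρ :=
    hu.log hu0
  have hinv : HasDerivAt (fun x => 2 / (Real.log x)^2)
      ((0 * L^2 - 2 * ((2:ℕ) * L^1 * ρ⁻¹)) / (L^2)^2) ρ :=
    (hasDerivAt_const ρ 2).div hp2 (pow_ne_zero 2 hL0)
  have H := ((((hp3.div_const 3).sub (hp2.div_const 2)).sub (hlog.const_mul 2)).sub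
      (hlogu.const_mul 4)).sub hinv
  refine H.congr_deriv ?_
  have hD2 : L * (L + 2) + 2 ≠ 0 := by nlinarith
  field_simp
  ring
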